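/- Let (K̄, ν̄) be an algebraically closed valued field, f ∈ K̄[X] nonconstant, a ∈ K̄ a root of f, and ρ ∈ Φ(ν̄). Then the set {λ ∈ Φ(ν̄) : D(a, λ) ⊆ D̃(f, ρ)} has a minimum, given explicitly by ε(a; f, ρ) = max_{1 ≤ i ≤ deg f} (ρ − ν̄(∂_i f(a)))/i. -/

import Mathlib

open Polynomial

/-- An additive (Krull) valuation with values in `Γ ∪ {∞}`. -/
structure IsValAdd {R : Type*} [CommRing R] {Γ : Type*} [AddCommGroup Γ] [LinearOrder Γ] [IsOrderedAddMonoid Γ]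
    (v : R → WithTop Γ) : Prop where
  map_mul : ∀ a b, v (a * b) = v a + v b
  map_add : ∀ a b, min (v a) (v b) ≤ v (a + b)
  map_one : v 1 = 0
  map_zero : v 0 = ⊤
  supp : ∀ a, v a = ⊤ → a = 0

/-- The valuation associated to a pair `(a, δ)`:
`ν_{a,δ}(∑ aᵢ (X - a)ⁱ) = min_i (ν aᵢ + i•δ)`. -/
noncomputable def pairVal {K : Type*} [Field K] {Γ : Type*} [AddCommGroup Γ] [LinearOrder Γ] [IsOrderedAddMonoid Γ]
    (ν : K → WithTop Γ) (a : K) (δ : Γ) (f : K[X]) : WithTop Γ :=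
  (Finset.range (f.natDegree + 1)).inf
    fun i => ν ((Polynomial.taylor a f).coeff i) + ((i • δ : Γ) : WithTop Γ)

/-- The coefficients of the `Q`-expansion of a polynomial, by iterated euclidean division. -/
noncomputable def qCoeff {K : Type*} [Field K] (Q : K[X]) : ℕ → K[X] → K[X]
  | 0, f => f %ₘ Q
  | n + 1, f => qCoeff Q n (f /ₘ Q)

/-- The truncation `μ_Q` of `μ` along `Q` : `μ_Q(f) = min_i μ(fᵢ Qⁱ)` over the
`Q`-expansion `f = ∑ fᵢ Qⁱ`. -/
noncomputable def trunc {K : Type*} [Field K] {Γ : Type*} [AddCommGroup Γ] [LinearOrder Γ] [IsOrderedAddMonoid Γ]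
    (μ : K[X] → WithTop Γ) (Q : K[X]) (f : K[X]) : WithTop Γ :=
  (Finset.range (f.natDegree + 1)).inf fun i => μ (qCoeff Q i f * Q ^ i)

/-- `ε_μ(f) < ε_μ(Q)`, stated in cross-multiplied form (valid in the divisible hull). -/
def EpsLt {K : Type*} [Field K] {Γ : Type*} [AddCommGroup Γ] [LinearOrder Γ] [IsOrderedAddMonoid Γ]
    (μ : K[X] → WithTop Γ) (f Q : K[X]) : Prop :=
  ∃ j, 1 ≤ j ∧ μ (hasseDeriv j Q) ≠ ⊤ ∧
    ∀ i, 1 ≤ i → j • μ f + i • μ (hasseDeriv j Q) < i • μ Q + j • μ (hasseDeriv i f)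

/-- `ε_{μ₁}(f) ≤ ε_{μ₂}(g)`, stated in cross-multiplied form. -/
def EpsLE {K L : Type*} [Field K] [Field L] {Γ : Type*} [AddCommGroup Γ] [LinearOrder Γ] [IsOrderedAddMonoid Γ]
    (μ₁ : K[X] → WithTop Γ) (f : K[X]) (μ₂ : L[X] → WithTop Γ) (g : L[X]) : Prop :=
  ∀ i, 1 ≤ i → ∃ j, 1 ≤ j ∧
    j • μ₁ f + i • μ₂ (hasseDeriv j g) ≤ i • μ₂ g + j • μ₁ (hasseDeriv i f)

/-- `Q` is an abstract key polynomial for `μ`. -/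
def IsABKP {K : Type*} [Field K] {Γ : Type*} [AddCommGroup Γ] [LinearOrder Γ] [IsOrderedAddMonoid Γ]
    (μ : K[X] → WithTop Γ) (Q : K[X]) : Prop :=
  Q.Monic ∧ ∀ f : K[X], f ≠ 0 → f.degree < Q.degree → EpsLt μ f Q

set_option linter.unusedSectionVars false

section Helpers

variable {L : Type*} [Field L] {Γ : Type*} [AddCommGroup Γ] [LinearOrder Γ] [IsOrderedAddMonoid Γ] {ν : L → WithTop Γ}

lemma coe_nsmul' (g : Γ) (n : ℕ) : ((n • g : Γ) : WithTop Γ) = n • (g : WithTop Γ) := by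
  induction n with
  | zero => simp
  | succ k ih => rw [succ_nsmul, succ_nsmul, WithTop.coe_add, ih]

lemma IsValAdd.ne_top (hν : IsValAdd ν) {x : L} (hx : x ≠ 0) : ν x ≠ ⊤ :=
  fun h => hx (hν.supp x h)

lemma IsValAdd.vneg (hν : IsValAdd ν) (x : L) : ν (-x) = ν x := by
  have h1 : ν (-1 : L) = 0 := by
    have h := hν.map_mul (-1) (-1)
    rw [neg_mul_neg, one_mul, hν.map_one] at h
    obtain ⟨g, hg⟩ := WithTop.ne_top_iff_exists.mp (hν.ne_top (by norm_num : (-1:L) ≠ 0))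
    rw [← hg] at h ⊢
    rw [← WithTop.coe_add, show ((0:WithTop Γ)) = ((0:Γ):WithTop Γ) from rfl,
      WithTop.coe_eq_coe] at h
    rw [show ((0:WithTop Γ)) = ((0:Γ):WithTop Γ) from rfl, WithTop.coe_eq_coe]
    rcases lt_trichotomy g 0 with hg | hg | hg
    · exact absurd h.symm (by simpa using (add_lt_add hg hg).ne)
    · exact hg
    · exact absurd h.symm (by simpa using (add_lt_add hg hg).ne')
  calc ν (-x) = ν ((-1) * x) := by rw [neg_one_mul]
  _ = ν x := by rw [hν.map_mul, h1, zero_add]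

lemma IsValAdd.add_eq_left (hν : IsValAdd ν) {u v : L} (h : ν u < ν v) : ν (u + v) = ν u := by
  have hmin : min (ν (u + v)) (ν v) ≤ ν u := by
    have := hν.map_add (u + v) (-v)
    rwa [add_neg_cancel_right, hν.vneg] at this
  have hge : ν u ≤ ν (u + v) := min_eq_left h.le ▸ hν.map_add u v
  rcases min_le_iff.mp hmin with h1 | h1
  · exact le_antisymm h1 hge
  · exact absurd h1 (not_le.mpr h)

lemma IsValAdd.sub_min (hν : IsValAdd ν) (u v : L) : min (ν u) (ν v) ≤ ν (u - v) := by
  have := hν.map_add u (-v)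
  rwa [hν.vneg, ← sub_eq_add_neg] at this

lemma IsValAdd.vpow (hν : IsValAdd ν) (x : L) (n : ℕ) : ν (x ^ n) = n • ν x := by
  induction n with
  | zero => simpa using hν.map_one
  | succ k ih => rw [pow_succ, hν.map_mul, ih, succ_nsmul]

lemma IsValAdd.multiset_prod (hν : IsValAdd ν) (s : Multiset L) :
    ν s.prod = (s.map ν).sum := by
  induction s using Multiset.induction with
  | empty => simpa using hν.map_one
  | cons r s ih => rw [Multiset.prod_cons, hν.map_mul, ih, Multiset.map_cons, Multiset.sum_cons]

lemma IsValAdd.finset_sum (hν : IsValAdd ν) {ι : Type*} (s : Finset ι) (g : ι → L)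
    {C : WithTop Γ} (h : ∀ i ∈ s, C ≤ ν (g i)) : C ≤ ν (∑ i ∈ s, g i) := by
  classical
  induction s using Finset.induction with
  | empty => simp [hν.map_zero]
  | @insert a s' hne ih =>
    rw [Finset.sum_insert hne]
    refine le_trans (le_min (h a (by simp)) (ih fun i hi => h i (by simp [hi]))) ?_
    exact hν.map_add _ _

end Helpers

section Helpers2

variable {L : Type*} [Field L] [IsAlgClosed L] {Γ : Type*} [AddCommGroup Γ] [LinearOrder Γ] [IsOrderedAddMonoid Γ]
  {ν : L → WithTop Γ}

/-- Lemma A: a "generic direction" avoiding finitely many residues. -/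
lemma exists_unit_dir (hν : IsValAdd ν) (s : Multiset L)
    (hs : ∀ r ∈ s, (0 : WithTop Γ) ≤ ν r) :
    ∃ t : L, (0 : WithTop Γ) ≤ ν t ∧ ∀ r ∈ s, ν (t - r) = 0 := by
  rcases eq_or_ne s 0 with rfl | hs0
  · exact ⟨1, by simp [hν.map_one], by simp⟩
  · set P : Polynomial L := (s.map fun r => X - C r).prod - 1 with hP
    have hdeg : P.degree ≠ 0 := by
      have h1 : ((s.map fun r => X - C r).prod).natDegree = Multiset.card s :=
        natDegree_multiset_prod_X_sub_C_eq_card s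
      have hm : ((s.map fun r => X - C r).prod).Monic := monic_multiset_prod_of_monic _ _
        fun r _ => monic_X_sub_C r
      have hcard : 0 < Multiset.card s := Multiset.card_pos.mpr hs0
      have : P.natDegree = Multiset.card s := by
        rw [hP]
        rw [natDegree_sub_eq_left_of_natDegree_lt (by simpa [h1] using hcard)]
        exact h1
      intro hc
      have hP0 : P.natDegree = 0 := natDegree_eq_zero_iff_degree_le_zero.mpr (le_of_eq hc)
      omega
    obtain ⟨t, ht⟩ := IsAlgClosed.exists_root P hdeg
    have hroot : (s.map fun r => t - r).prod = 1 := by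
      have := ht
      rw [IsRoot, hP, eval_sub, eval_one, sub_eq_zero, eval_multiset_prod,
        Multiset.map_map] at this
      simpa using this
    have hsum : ((s.map fun r => ν (t - r))).sum = 0 := by
      have h0 : ((s.map fun r => t - r).map ν).sum = 0 := by
        rw [← hν.multiset_prod, hroot, hν.map_one]
      rw [Multiset.map_map] at h0
      simpa [Function.comp] using h0
    have ht0 : (0 : WithTop Γ) ≤ ν t := by
      by_contra hcon
      push_neg at hcon
      have hall : (s.map fun r => ν (t - r)) = s.map fun _ => ν t := by
        refine Multiset.map_congr rfl fun r hr => ?_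
        have h2 : ν t < ν (-r) := by rw [hν.vneg]; exact lt_of_lt_of_le hcon (hs r hr)
        have h3 := hν.add_eq_left h2
        rwa [← sub_eq_add_neg] at h3
      rw [hall, Multiset.map_const', Multiset.sum_replicate] at hsum
      obtain ⟨g, hg⟩ := WithTop.ne_top_iff_exists.mp (ne_top_of_lt hcon)
      rw [← hg, ← coe_nsmul'] at hsum
      have hg0 : g < 0 := by
        rw [← WithTop.coe_lt_coe]
        rw [hg]
        exact lt_of_lt_of_le hcon le_rfl
      have hcard : Multiset.card s ≠ 0 := by
        simpa using Multiset.card_pos.mpr hs0 |>.ne'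
      have : Multiset.card s • g < 0 := by
        have := nsmul_lt_nsmul_right hcard hg0
        simpa using this
      rw [show ((0:WithTop Γ)) = ((0:Γ):WithTop Γ) from rfl, WithTop.coe_eq_coe] at hsum
      exact absurd hsum this.ne
    refine ⟨t, ht0, fun r hr => ?_⟩
    have hge : (0 : WithTop Γ) ≤ ν (t - r) := le_trans (le_min ht0 (hs r hr)) (hν.sub_min t r)
    have hmem : ν (t - r) ∈ s.map fun r => ν (t - r) := Multiset.mem_map_of_mem _ hr
    obtain ⟨s', hs'⟩ := Multiset.exists_cons_of_mem hmem
    have hrest : (0 : WithTop Γ) ≤ s'.sum := by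
      refine Multiset.sum_nonneg fun x hx => ?_
      have hx' : x ∈ s.map fun r => ν (t - r) := by rw [hs']; exact Multiset.mem_cons_of_mem hx
      obtain ⟨r', hr', rfl⟩ := Multiset.mem_map.mp hx'
      exact le_trans (le_min ht0 (hs r' hr')) (hν.sub_min t r')
    have hle : ν (t - r) ≤ 0 := by
      rw [hs', Multiset.sum_cons] at hsum
      calc ν (t - r) ≤ ν (t - r) + s'.sum := le_add_of_nonneg_right hrest
      _ = 0 := hsum
    exact le_antisymm hle hge

/-- Newton inequality: every coefficient of `C c * ∏ (X - r)` has valuation at least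
`ν c + ∑ min 0 (ν r)`. -/
lemma coeff_bound (hν : IsValAdd ν) (c : L) (s : Multiset L) (i : ℕ) :
    ν c + (s.map fun r => min 0 (ν r)).sum ≤
      ν ((C c * (s.map fun r => X - C r).prod).coeff i) := by
  induction s using Multiset.induction generalizing i with
  | empty =>
    simp only [Multiset.map_zero, Multiset.prod_zero, mul_one, Multiset.sum_zero, add_zero]
    rcases eq_or_ne i 0 with rfl | hi
    · simp
    · simp [coeff_C, hi, hν.map_zero]
  | cons r s ih =>
    simp only [Multiset.map_cons, Multiset.prod_cons, Multiset.sum_cons]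
    set q : L[X] := C c * (s.map fun r => X - C r).prod with hq
    have hre : C c * ((X - C r) * (s.map fun r => X - C r).prod) = q * X - C r * q := by
      ring
    rw [hre]
    set B : WithTop Γ := ν c + (s.map fun r => min 0 (ν r)).sum with hB
    have hBle : ν c + (min 0 (ν r) + (s.map fun r => min 0 (ν r)).sum) = min 0 (ν r) + B := by
      exact add_left_comm _ _ _
    rw [hBle]
    have key : ∀ j, min 0 (ν r) + B ≤ ν ((q * X - C r * q).coeff j) := by
      intro j
      rw [coeff_sub, coeff_C_mul]
      have h2 : min 0 (ν r) + B ≤ ν (r * q.coeff j) := by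
        rw [hν.map_mul]
        exact add_le_add (min_le_right _ _) (ih j)
      rcases j with _ | j
      · rw [coeff_mul_X_zero, zero_sub, hν.vneg]
        exact h2
      · rw [coeff_mul_X]
        refine le_trans (le_min ?_ h2) (hν.sub_min _ _)
        exact le_trans (add_le_of_nonpos_left (min_le_left _ _)) (ih j)
    exact key i

/-- Lemma B: a point in the unit ball where the polynomial achieves the minimum
of the valuations of its coefficients. -/
lemma exists_generic (hν : IsValAdd ν) (g : L[X]) :
    ∃ t : L, (0 : WithTop Γ) ≤ ν t ∧ ∀ i, ν (g.eval t) ≤ ν (g.coeff i) := by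
  classical
  rcases eq_or_ne g 0 with rfl | hg
  · exact ⟨1, by simp [hν.map_one], fun i => by simp [hν.map_zero]⟩
  · have heq := (IsAlgClosed.splits g).eq_prod_roots
    set s := g.roots with hs
    set c := g.leadingCoeff with hc
    obtain ⟨t, ht0, htd⟩ := exists_unit_dir hν (s.filter fun r => (0:WithTop Γ) ≤ ν r)
      (fun r hr => (Multiset.mem_filter.mp hr).2)
    refine ⟨t, ht0, fun i => ?_⟩
    have hval : ν (g.eval t) = ν c + (s.map fun r => min 0 (ν r)).sum := by
      conv_lhs => rw [heq]
      rw [eval_mul, eval_C, hν.map_mul, eval_multiset_prod, Multiset.map_map]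
      congr 1
      have : ∀ x ∈ s, ν ((eval t ∘ fun a => X - C a) x) = min 0 (ν x) := by
        intro r hr
        simp only [Function.comp_apply, eval_sub, eval_X, eval_C]
        by_cases h0 : (0:WithTop Γ) ≤ ν r
        · rw [htd r (Multiset.mem_filter.mpr ⟨hr, h0⟩), min_eq_left h0]
        · push_neg at h0
          have h2 : ν (-r) < ν t := by
            rw [hν.vneg]; exact lt_of_lt_of_le h0 ht0
          have h3 := hν.add_eq_left h2
          rw [neg_add_eq_sub] at h3
          rw [h3, hν.vneg, min_eq_right h0.le]
      rw [hν.multiset_prod, Multiset.map_map]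
      exact congrArg Multiset.sum (Multiset.map_congr rfl fun x hx => by
        simpa [Function.comp] using this x hx)
    rw [hval]
    conv_rhs => rw [heq]
    exact coeff_bound hν c s i

lemma coeff_comp_C_mul_X {K : Type*} [CommRing K] (p : K[X]) (b : K) (i : ℕ) :
    (p.comp (C b * X)).coeff i = p.coeff i * b ^ i := by
  induction p using Polynomial.induction_on' generalizing i with
  | add p q hp hq => simp [add_comp, coeff_add, hp, hq, add_mul]
  | monomial n c =>
    rw [monomial_comp, mul_pow, ← C_pow, mul_left_comm, ← mul_assoc, ← C_mul, coeff_C_mul, coeff_X_pow,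
      coeff_monomial]
    split_ifs with h1 h2 h2
    · subst h2; ring
    · omega
    · omega
    · ring

end Helpers2

/-- the set `{λ ∈ Φ(ν̄) : D(a,λ) ⊆ D̃(f,ρ)}` has a minimum
`ε₀ = ε(a; f, ρ) = max_{i ≥ 1} (ρ − ν̄(∂ᵢ f(a)))/i` (the max is expressed in
cross-multiplied, division-free form), which moreover lies in the value group. -/
theorem diskoid_ball_radius {L Γ : Type*} [Field L] [IsAlgClosed L]
    [AddCommGroup Γ] [LinearOrder Γ] [IsOrderedAddMonoid Γ]
    (ν : L → WithTop Γ) (hν : IsValAdd ν)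
    (f : Polynomial L) (hfdeg : 0 < f.natDegree)
    (a : L) (ha : f.eval a = 0)
    (ρ : Γ) (hρ : ∃ b : L, b ≠ 0 ∧ ν b = (ρ : WithTop Γ)) :
    ∃ ε₀ : Γ,
      (∃ b : L, b ≠ 0 ∧ ν b = (ε₀ : WithTop Γ)) ∧
      (∀ lam : Γ, (∃ b : L, b ≠ 0 ∧ ν b = (lam : WithTop Γ)) →
        ((∀ x : L, (lam : WithTop Γ) ≤ ν (x - a) → (ρ : WithTop Γ) ≤ ν (f.eval x)) ↔
          ε₀ ≤ lam)) ∧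
      (∀ i, 1 ≤ i →
        (ρ : WithTop Γ) ≤ ((i • ε₀ : Γ) : WithTop Γ) + ν ((Polynomial.hasseDeriv i f).eval a)) ∧
      (∃ i, 1 ≤ i ∧
        (ρ : WithTop Γ) = ((i • ε₀ : Γ) : WithTop Γ) + ν ((Polynomial.hasseDeriv i f).eval a)) := by
  classical
  obtain ⟨b, hb0, hbρ⟩ := hρ
  set n := f.natDegree with hn
  set d : ℕ → L := fun i => (Polynomial.taylor a f).coeff i with hd
  have hd0 : d 0 = 0 := by rw [hd]; simp [Polynomial.taylor_coeff_zero, ha]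
  have hft : Polynomial.taylor a f ≠ 0 := by
    intro h
    have h2 := Polynomial.natDegree_taylor f a
    rw [h] at h2
    simp only [Polynomial.natDegree_zero] at h2
    omega
  have hdn : d n ≠ 0 := by
    have h2 : d n = (Polynomial.taylor a f).leadingCoeff := by
      rw [hd, Polynomial.leadingCoeff, Polynomial.natDegree_taylor]
    rw [h2]
    exact Polynomial.leadingCoeff_ne_zero.mpr hft
  have hdbig : ∀ i, n < i → d i = 0 := fun i hi =>
    Polynomial.coeff_eq_zero_of_natDegree_lt (by rw [Polynomial.natDegree_taylor]; exact hi)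
  set S : Finset ℕ := (Finset.Icc 1 n).filter (fun i => d i ≠ 0) with hS
  have hmemS : ∀ {i : ℕ}, i ∈ S ↔ (1 ≤ i ∧ i ≤ n ∧ d i ≠ 0) := by
    intro i; simp [hS, Finset.mem_Icc, and_assoc]
  have hnS : n ∈ S := hmemS.mpr ⟨hfdeg, le_rfl, hdn⟩
  have key : ∀ i ∈ S, ∃ ε : Γ, (∃ u : L, u ≠ 0 ∧ ν u = (ε : WithTop Γ)) ∧
      (ρ : WithTop Γ) = ((i • ε : Γ) : WithTop Γ) + ν (d i) := by
    intro i hi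
    obtain ⟨h1i, hin, hdi⟩ := hmemS.mp hi
    obtain ⟨u, hu⟩ := IsAlgClosed.exists_pow_nat_eq (b / d i) (show 0 < i by omega)
    have hu0 : u ≠ 0 := by
      intro h
      rw [h, zero_pow (by omega)] at hu
      rcases div_eq_zero_iff.mp hu.symm with h' | h'
      · exact hb0 h'
      · exact hdi h'
    obtain ⟨ε, hε⟩ := WithTop.ne_top_iff_exists.mp (hν.ne_top hu0)
    refine ⟨ε, ⟨u, hu0, hε.symm⟩, ?_⟩
    have hcalc : ν (u ^ i * d i) = ν b := by rw [hu, div_mul_cancel₀ _ hdi]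
    rw [hν.map_mul, hν.vpow, ← hε, ← coe_nsmul', hbρ] at hcalc
    exact hcalc.symm
  set E : ℕ → Γ := fun i => if h : i ∈ S then (key i h).choose else 0 with hEdef
  have hE : ∀ i (hi : i ∈ S), (∃ u : L, u ≠ 0 ∧ ν u = ((E i : Γ) : WithTop Γ)) ∧
      (ρ : WithTop Γ) = ((i • E i : Γ) : WithTop Γ) + ν (d i) := by
    intro i hi
    simp only [hEdef, dif_pos hi]
    exact (key i hi).choose_spec
  obtain ⟨i₀, hi₀, hmax⟩ := S.exists_max_image E ⟨n, hnS⟩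
  have hP3 : ∀ i, 1 ≤ i → (ρ : WithTop Γ) ≤ ((i • E i₀ : Γ) : WithTop Γ) + ν (d i) := by
    intro i hi
    by_cases hdi : d i = 0
    · rw [hdi, hν.map_zero, add_top]; exact le_top
    · have hin : i ≤ n := by
        by_contra hc
        exact hdi (hdbig i (by omega))
      have hiS : i ∈ S := hmemS.mpr ⟨hi, hin, hdi⟩
      rw [(hE i hiS).2]
      refine add_le_add_left ?_ _
      rw [WithTop.coe_le_coe]
      exact nsmul_le_nsmul_right (hmax i hiS) i
  have htc : ∀ i, (Polynomial.hasseDeriv i f).eval a = d i := by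
    intro i
    show _ = (Polynomial.taylor a f).coeff i
    rw [Polynomial.taylor_coeff]
  refine ⟨E i₀, (hE i₀ hi₀).1, ?_, fun i hi => by rw [htc]; exact hP3 i hi,
    ⟨i₀, (hmemS.mp hi₀).1, by rw [htc]; exact (hE i₀ hi₀).2⟩⟩
  rintro lam ⟨b', hb'0, hb'lam⟩
  constructor
  · intro H
    by_contra hcon
    push_neg at hcon
    set g : L[X] := (Polynomial.taylor a f).comp (C b' * X) with hg
    obtain ⟨t, ht0, htle⟩ := exists_generic hν g
    set x := b' * t + a with hx
    have hxa : (lam : WithTop Γ) ≤ ν (x - a) := by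
      rw [hx, add_sub_cancel_right, hν.map_mul, hb'lam]
      exact le_add_of_nonneg_right ht0
    have hev : f.eval x = g.eval t := by
      rw [hg, eval_comp, eval_mul, eval_C, eval_X, Polynomial.taylor_eval]
    have h1 : (ρ : WithTop Γ) ≤ ν (g.eval t) := hev ▸ H x hxa
    have h2 := htle i₀
    rw [hg, coeff_comp_C_mul_X] at h2
    have h3 : ν ((Polynomial.taylor a f).coeff i₀ * b' ^ i₀) =
        ν (d i₀) + ((i₀ • lam : Γ) : WithTop Γ) := by
      rw [hν.map_mul, hν.vpow, hb'lam, ← coe_nsmul', hd]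
    obtain ⟨hi₀1, _, hdi₀⟩ := hmemS.mp hi₀
    obtain ⟨cc, hcc⟩ := WithTop.ne_top_iff_exists.mp (hν.ne_top hdi₀)
    have h4 : (ρ : WithTop Γ) ≤ ν (d i₀) + ((i₀ • lam : Γ) : WithTop Γ) :=
      le_trans h1 (le_trans h2 (le_of_eq h3))
    have h5 := (hE i₀ hi₀).2
    rw [← hcc, ← WithTop.coe_add] at h4 h5
    rw [h5, WithTop.coe_le_coe] at h4
    have h6 : i₀ • lam < i₀ • E i₀ := nsmul_lt_nsmul_right (by omega) hcon
    have h7 : i₀ • E i₀ ≤ i₀ • lam := by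
      rw [add_comm cc] at h4
      exact le_of_add_le_add_right h4
    exact absurd h7 (not_le.mpr h6)
  · intro hle x hx
    have hfx : f.eval x = (Polynomial.taylor a f).eval (x - a) :=
      (Polynomial.taylor_eval_sub a f x).symm
    rw [hfx, Polynomial.eval_eq_sum_range, Polynomial.natDegree_taylor]
    refine hν.finset_sum _ _ fun i hiR => ?_
    rcases Nat.eq_zero_or_pos i with rfl | hip
    · have : (Polynomial.taylor a f).coeff 0 * (x - a) ^ 0 = 0 := by
        rw [← hd] at *
        rw [show (Polynomial.taylor a f).coeff 0 = d 0 from rfl, hd0, zero_mul]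
      rw [this, hν.map_zero]
      exact le_top
    · have hchain := hP3 i hip
      rw [hν.map_mul, hν.vpow]
      refine le_trans hchain ?_
      rw [hd]
      rw [add_comm (ν ((Polynomial.taylor a f).coeff i))]
      refine add_le_add_left ?_ _
      calc ((i • E i₀ : Γ) : WithTop Γ) = i • ((E i₀ : Γ) : WithTop Γ) := coe_nsmul' _ _
      _ ≤ i • ((lam : Γ) : WithTop Γ) := nsmul_le_nsmul_right (WithTop.coe_le_coe.mpr hle) i
      _ ≤ i • ν (x - a) := nsmul_le_nsmul_right hx i
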